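/- There is an RRD strategy in the one-state game with two actions that is not outcome-equivalent to any DRD strategy: the RRD strategy that initially mixes uniformly between a coin-flipping state and an always-b state plays a with positive probability after every consistent history yet assigns probability 1/2 to the play in which a never occurs; no DRD strategy can satisfy both properties. -/

import Mathlib

open Filter
open scoped Classical

/-- A stochastic Mealy machine for the one-state game with two actions
(`true` = action a, `false` = action b). -/
structure OneMealy (n : ℕ) where
  init : Fin n → ℝ
  next : Fin n → Bool → ℝ
  up : Fin n → Bool → Fin n → ℝ

def Proper {n : ℕ} (N : OneMealy n) : Prop :=
  (∀ m, 0 ≤ N.init m) ∧ (∑ m, N.init m) = 1 ∧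
  (∀ m c, 0 ≤ N.next m c) ∧ (∀ m, ∑ c, N.next m c = 1) ∧
  (∀ m c m', 0 ≤ N.up m c m') ∧ ∀ m c, ∑ m', N.up m c m' = 1

def IsDirac {α : Type} (μ : α → ℝ) : Prop := ∃ x, ∀ y, μ y = if y = x then 1 else 0

def DetInit {n : ℕ} (N : OneMealy n) : Prop := IsDirac N.init
def DetNext {n : ℕ} (N : OneMealy n) : Prop := ∀ m, IsDirac (N.next m)
def DetUp {n : ℕ} (N : OneMealy n) : Prop := ∀ m c, IsDirac (N.up m c)

/-- Bayesian update of the memory distribution upon playing action `c`. -/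
noncomputable def ostep {n : ℕ} (N : OneMealy n) (μ : Fin n → ℝ) (c : Bool) :
    Fin n → ℝ :=
  if (∑ m', μ m' * N.next m' c) = 0 then fun m => ∑ m', μ m' * N.up m' c m
  else fun m => (∑ m', μ m' * N.up m' c m * N.next m' c) / (∑ m', μ m' * N.next m' c)

/-- Distribution over memory states after the word `w` of actions. -/
noncomputable def omemDist {n : ℕ} (N : OneMealy n) (w : List Bool) : Fin n → ℝ :=
  w.foldl (ostep N) N.init

/-- The strategy induced by the machine. -/
noncomputable def oStrat {n : ℕ} (N : OneMealy n) (w : List Bool) (c : Bool) : ℝ :=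
  ∑ m, omemDist N w m * N.next m c

/-- Probability of the cylinder of the finite action word `l` under strategy `σ`. -/
def cylProb (σ : List Bool → Bool → ℝ) (l : List Bool) : ℝ :=
  ∏ i ∈ Finset.range l.length, σ (l.take i) (l.getD i false)

/-- Outcome equivalence in the one-state game: identical cylinder probabilities. -/
noncomputable def OEquiv {n k : ℕ} (N : OneMealy n) (B : OneMealy k) : Prop :=
  ∀ w : List Bool, cylProb (oStrat N) w = cylProb (oStrat B) w

/-- Consistency of an action word with a strategy. -/
def consistentW (σ : List Bool → Bool → ℝ) (w : List Bool) : Prop :=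
  ∀ i < w.length, 0 < σ (w.take i) (w.getD i false)

/-- There is an RRD strategy (randomised initialisation and outputs,
deterministic updates) in the one-state game with two actions that is not
outcome-equivalent to any DRD strategy (deterministic initialisation and
updates, randomised outputs). -/
/- ### auxiliary lemmas -/

lemma prod_snoc_aux (F : List Bool → Bool → ℝ) (w : List Bool) (c : Bool) :
    ∏ i ∈ Finset.range (w ++ [c]).length, F ((w ++ [c]).take i) ((w ++ [c]).getD i false)
      = (∏ i ∈ Finset.range w.length, F (w.take i) (w.getD i false)) * F w c := by
  have hlen : (w ++ [c]).length = w.length + 1 := by simp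
  rw [hlen, Finset.prod_range_succ]
  congr 1
  · refine Finset.prod_congr rfl fun i hi => ?_
    rw [Finset.mem_range] at hi
    have ht : (w ++ [c]).take i = w.take i := by
      rw [List.take_append]
      have : i - w.length = 0 := by omega
      simp [this]
    have hg : (w ++ [c]).getD i false = w.getD i false := by
      simp [List.getD_eq_getElem?_getD, List.getElem?_append, hi]
    rw [ht, hg]
  · have ht : (w ++ [c]).take w.length = w := List.take_left
    have hg : (w ++ [c]).getD w.length false = c := by
      simp [List.getD_eq_getElem?_getD, List.getElem?_append]
    rw [ht, hg]

lemma cylProb_snoc (σ : List Bool → Bool → ℝ) (w : List Bool) (c : Bool) :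
    cylProb σ (w ++ [c]) = cylProb σ w * σ w c :=
  prod_snoc_aux σ w c

lemma cylProb_nil (σ : List Bool → Bool → ℝ) : cylProb σ [] = 1 := by
  simp [cylProb]

lemma omemDist_snoc {n : ℕ} (N : OneMealy n) (w : List Bool) (c : Bool) :
    omemDist N (w ++ [c]) = ostep N (omemDist N w) c := by
  simp [omemDist, List.foldl_append]

/-- weight of memory `m` on word `w` for an identity-update machine -/
noncomputable def wgt {n : ℕ} (N : OneMealy n) (w : List Bool) (m : Fin n) : ℝ :=
  N.init m * ∏ i ∈ Finset.range w.length, N.next m (w.getD i false)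

lemma wgt_snoc {n : ℕ} (N : OneMealy n) (w : List Bool) (c : Bool) (m : Fin n) :
    wgt N (w ++ [c]) m = wgt N w m * N.next m c := by
  unfold wgt
  rw [prod_snoc_aux (fun _ b => N.next m b) w c, mul_assoc]

lemma wgt_nonneg {n : ℕ} {N : OneMealy n} (hP : Proper N) (w : List Bool) (m : Fin n) :
    0 ≤ wgt N w m :=
  mul_nonneg (hP.1 m) (Finset.prod_nonneg fun _i _ => hP.2.2.1 m _)

/-- Key computation for identity-update machines. -/
lemma key_identity {n : ℕ} (N : OneMealy n) (hP : Proper N)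
    (hup : ∀ m c m', N.up m c m' = if m' = m then 1 else 0) (w : List Bool) :
    cylProb (oStrat N) w = ∑ m, wgt N w m ∧
      ∀ m, omemDist N w m * (∑ m', wgt N w m') = wgt N w m := by
  induction w using List.reverseRecOn with
  | nil =>
      constructor
      · simp [cylProb_nil, wgt, hP.2.1]
      · intro m; simp [wgt, omemDist, hP.2.1]
  | append_singleton w c ih =>
      obtain ⟨ihc, ihm⟩ := ih
      set S : ℝ := ∑ m', wgt N w m' with hS
      set S' : ℝ := ∑ m', wgt N (w ++ [c]) m' with hS'
      have hS'eq : S' = ∑ m', wgt N w m' * N.next m' c := by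
        simp [hS', wgt_snoc]
      by_cases h0 : S = 0
      · -- all weights are zero
        have hall : ∀ m, wgt N w m = 0 := by
          intro m
          have := (Finset.sum_eq_zero_iff_of_nonneg
            (fun m _ => wgt_nonneg hP w m)).mp h0
          exact this m (Finset.mem_univ m)
        have hS'0 : S' = 0 := by
          rw [hS'eq]; apply Finset.sum_eq_zero; intro m _; rw [hall]; ring
        constructor
        · rw [cylProb_snoc, ihc, h0, zero_mul, hS'0]
        · intro m
          rw [hS'0, mul_zero, wgt_snoc, hall, zero_mul]
      · -- S ≠ 0
        have hmu : ∀ m, omemDist N w m = wgt N w m / S := by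
          intro m
          have := ihm m
          field_simp
          linarith [this]
        have hstrat : oStrat N w c = S' / S := by
          unfold oStrat
          rw [hS'eq]
          rw [Finset.sum_div]
          refine Finset.sum_congr rfl fun m _ => ?_
          rw [hmu m]; ring
        have hcyl' : cylProb (oStrat N) (w ++ [c]) = S' := by
          rw [cylProb_snoc, ihc, hstrat]
          field_simp
        refine ⟨hcyl', ?_⟩
        intro m
        have hden : (∑ m', omemDist N w m' * N.next m' c) = S' / S := hstrat
        rw [omemDist_snoc]
        by_cases h0' : S' = 0
        · -- each wgt' is zero
          have hall' : ∀ m, wgt N w m * N.next m c = 0 := by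
            intro m
            have hnn : ∀ m ∈ Finset.univ, (0:ℝ) ≤ wgt N w m * N.next m c :=
              fun m _ => mul_nonneg (wgt_nonneg hP w m) (hP.2.2.1 m c)
            have := (Finset.sum_eq_zero_iff_of_nonneg hnn).mp (by rw [← hS'eq, h0'])
            exact this m (Finset.mem_univ m)
          rw [h0', mul_zero, wgt_snoc, hall']
        · have hdenne : (∑ m', omemDist N w m' * N.next m' c) ≠ 0 := by
            rw [hden]; exact div_ne_zero h0' h0
          rw [ostep, if_neg hdenne]
          have hnum : (∑ m', omemDist N w m' * N.up m' c m * N.next m' c)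
              = omemDist N w m * N.next m c := by
            simp [hup, mul_ite, ite_mul]
          rw [hnum, hden, hmu m, wgt_snoc]
          field_simp

/-- DetInit + DetUp machines have Dirac memory distributions. -/
lemma omemDist_dirac {k : ℕ} (B : OneMealy k) (hI : DetInit B) (hU : DetUp B)
    (w : List Bool) : IsDirac (omemDist B w) := by
  induction w using List.reverseRecOn with
  | nil => exact hI
  | append_singleton w c ih =>
      obtain ⟨m, hm⟩ := ih
      obtain ⟨m₂, hm₂⟩ := hU m c
      refine ⟨m₂, fun y => ?_⟩
      rw [omemDist_snoc]
      have hden : (∑ m', omemDist B w m' * B.next m' c) = B.next m c := by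
        simp [hm, ite_mul]
      by_cases h0 : (∑ m', omemDist B w m' * B.next m' c) = 0
      · rw [ostep, if_pos h0]
        simp [hm, ite_mul, hm₂]
      · rw [ostep, if_neg h0]
        have hnum : (∑ m', omemDist B w m' * B.up m' c y * B.next m' c)
            = B.up m c y * B.next m c := by
          simp [hm, ite_mul]
        rw [hnum, hden, hm₂]
        rw [hden] at h0
        by_cases hy : y = m₂ <;> simp [hy, h0]

lemma oStrat_dirac {k : ℕ} (B : OneMealy k) {w : List Bool} {m : Fin k}
    (hm : ∀ y, omemDist B w y = if y = m then 1 else 0) (c : Bool) :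
    oStrat B w c = B.next m c := by
  unfold oStrat
  simp [hm, ite_mul]

/-- the RRD machine -/
noncomputable def Nrrd : OneMealy 2 where
  init := fun _ => 1/2
  next := fun m c => if m = 0 then 1/2 else if c then 0 else 1
  up := fun m _ m' => if m' = m then 1 else 0

lemma Nrrd_proper : Proper Nrrd := by
  refine ⟨fun m => by norm_num [Nrrd], by norm_num [Nrrd, Fin.sum_univ_two],
    fun m c => ?_, fun m => ?_, fun m c m' => ?_, fun m c => ?_⟩
  · fin_cases m <;> cases c <;> norm_num [Nrrd]
  · rw [Fintype.sum_bool]; fin_cases m <;> norm_num [Nrrd]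
  · simp only [Nrrd]; split <;> norm_num
  · rw [Fin.sum_univ_two]; fin_cases m <;> norm_num [Nrrd]

lemma Nrrd_detup : DetUp Nrrd := fun m c => ⟨m, fun y => by simp [Nrrd]⟩

lemma Nrrd_getD_rep (j : ℕ) :
    ∀ i, (List.replicate j false).getD i false = false := by
  intro i
  rcases lt_or_ge i j with h | h
  · simp [List.getD_eq_getElem?_getD, List.getElem?_replicate, h]
  · simp [List.getD_eq_getElem?_getD, List.getElem?_replicate, not_lt.mpr h]

lemma Nrrd_cyl_rep (j : ℕ) :
    cylProb (oStrat Nrrd) (List.replicate j false) = (1/2) * (1/2)^j + 1/2 := by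
  rw [(key_identity Nrrd Nrrd_proper (fun m c m' => rfl) (List.replicate j false)).1]
  rw [Fin.sum_univ_two]
  unfold wgt
  have h0 : ∀ i ∈ Finset.range (List.replicate j false).length,
      Nrrd.next 0 ((List.replicate j false).getD i false) = 1/2 := by
    intro i _hi; rw [Nrrd_getD_rep]; rfl
  have h1 : ∀ i ∈ Finset.range (List.replicate j false).length,
      Nrrd.next 1 ((List.replicate j false).getD i false) = 1 := by
    intro i _hi; rw [Nrrd_getD_rep]; rfl
  rw [Finset.prod_congr rfl h0, Finset.prod_congr rfl h1]
  simp [Nrrd, List.length_replicate]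

lemma Nrrd_cyl_repa (j : ℕ) :
    cylProb (oStrat Nrrd) (List.replicate j false ++ [true]) = (1/2) * (1/2)^j * (1/2) := by
  rw [(key_identity Nrrd Nrrd_proper (fun m c m' => rfl) _).1]
  rw [Fin.sum_univ_two, wgt_snoc, wgt_snoc]
  have hn0 : Nrrd.next 0 true = 1/2 := rfl
  have hn1 : Nrrd.next 1 true = 0 := rfl
  rw [hn0, hn1, mul_zero, add_zero]
  unfold wgt
  have h0 : ∀ i ∈ Finset.range (List.replicate j false).length,
      Nrrd.next 0 ((List.replicate j false).getD i false) = 1/2 := by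
    intro i _hi; rw [Nrrd_getD_rep]; rfl
  rw [Finset.prod_congr rfl h0]
  simp [Nrrd, List.length_replicate]

theorem rrd_not_included_in_drd :
    ∃ (n : ℕ) (N : OneMealy n), Proper N ∧ DetUp N ∧
      ∀ (k : ℕ) (B : OneMealy k), Proper B → DetInit B → DetUp B →
        ¬ OEquiv N B := by
  refine ⟨2, Nrrd, Nrrd_proper, Nrrd_detup, ?_⟩
  intro k B hP hI hU hE
  -- Fin k is nonempty
  have hne : (Finset.univ : Finset (Fin k)).Nonempty := by
    rcases (Finset.univ : Finset (Fin k)).eq_empty_or_nonempty with h | h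
    · exfalso
      have := hP.2.1
      rw [h, Finset.sum_empty] at this
      norm_num at this
    · exact h
  -- dirac memory points along b^j
  have hD : ∀ j : ℕ, ∃ m : Fin k,
      ∀ y, omemDist B (List.replicate j false) y = if y = m then 1 else 0 := by
    intro j
    obtain ⟨m, hm⟩ := omemDist_dirac B hI hU (List.replicate j false)
    refine ⟨m, fun y => ?_⟩
    rw [hm y]
    congr
  choose M hM using hD
  -- cylProb B on b^j is a product of next false at M i
  have hcylB : ∀ j, cylProb (oStrat B) (List.replicate j false)
      = ∏ i ∈ Finset.range j, B.next (M i) false := by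
    intro j
    induction j with
    | zero => simp [cylProb]
    | succ j ihj =>
        rw [List.replicate_succ', cylProb_snoc, ihj, oStrat_dirac B (hM j),
          Finset.prod_range_succ]
  -- positivity of a at M j
  have hpos : ∀ j, 0 < B.next (M j) true := by
    intro j
    have h1 : cylProb (oStrat B) (List.replicate j false ++ [true])
        = (1/2) * (1/2)^j * (1/2) := by
      rw [← hE, Nrrd_cyl_repa]
    rw [cylProb_snoc, oStrat_dirac B (hM j)] at h1
    rcases (hP.2.2.1 (M j) true).lt_or_eq with h | h
    · exact h
    · exfalso
      rw [← h, mul_zero] at h1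
      have : (0:ℝ) < (1/2) * (1/2)^j * (1/2) := by positivity
      rw [← h1] at this
      exact lt_irrefl 0 this
  -- the uniform bound r < 1
  set r : ℝ := Finset.univ.sup' hne
    (fun m => if 0 < B.next m true then B.next m false else 0) with hr
  have hr1 : r < 1 := by
    rw [hr, Finset.sup'_lt_iff]
    intro m _
    split
    · -- next m false = 1 - next m true < 1
      have hsum := hP.2.2.2.1 m
      rw [Fintype.sum_bool] at hsum
      have := hP.2.2.1 m true
      rename_i hmt
      linarith
    · norm_num
  have hr0 : 0 ≤ r := by
    have := Finset.le_sup' (fun m => if 0 < B.next m true then B.next m false else 0)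
      (Finset.mem_univ (M 0))
    rw [← hr] at this
    refine le_trans ?_ this
    split
    · exact hP.2.2.1 (M 0) false
    · exact le_refl 0
  -- factor bound
  have hfac : ∀ i, B.next (M i) false ≤ r := by
    intro i
    have := Finset.le_sup' (fun m => if 0 < B.next m true then B.next m false else 0)
      (Finset.mem_univ (M i))
    rw [← hr, if_pos (hpos i)] at this
    exact this
  have hbound : ∀ j, cylProb (oStrat B) (List.replicate j false) ≤ r ^ j := by
    intro j
    rw [hcylB j]
    calc ∏ i ∈ Finset.range j, B.next (M i) false
        ≤ ∏ i ∈ Finset.range j, r :=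
          Finset.prod_le_prod (fun i _ => hP.2.2.1 (M i) false) (fun i _ => hfac i)
      _ = r ^ j := by rw [Finset.prod_const, Finset.card_range]
  obtain ⟨j, hj⟩ := exists_pow_lt_of_lt_one (show (0:ℝ) < 1/2 by norm_num) hr1
  have h1 : (1/2 : ℝ) < cylProb (oStrat Nrrd) (List.replicate j false) := by
    rw [Nrrd_cyl_rep]
    have : (0:ℝ) < (1/2) * (1/2)^j := by positivity
    linarith
  have h2 := hE (List.replicate j false)
  linarith [hbound j]
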